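/- For each fixed (t,x,m) ∈ [0,T] × ℝ × ℝ, the value functions v^N(t,x,m) = (η^N_t/2)(x − m)² + χ^N_t converge, as N → ∞, to v^∞(t,x,m) = (η^∞_t/2)(x − m)² + χ^∞_t. -/

import Mathlib

/-- The explicit solution `η` of the scalar Riccati equation, as a function of the
parameters `a, q, ε, c`, the horizon `T`, the coefficient `r` (which equals
`1 - 1/N²` for the `N`-player game and `1` for the mean field limit) and the time `t`. -/
noncomputable def etaAux (a q ε c T r t : ℝ) : ℝ :=
  let R := (a + q) ^ 2 + r * (ε - q ^ 2)
  let dp := -(a + q) + Real.sqrt R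
  let dm := -(a + q) - Real.sqrt R
  let e := Real.exp ((dp - dm) * (T - t))
  (-(ε - q ^ 2) * (e - 1) - c * (dp * e - dm)) / ((dm * e - dp) - c * r * (e - 1))

/-- `χ^N_t = ½ σ² (1−ρ²) (1 − 1/N) ∫_t^T η^N_s ds` for the `N`-player game
(`rN = 1 - 1/N²`, `rN' = 1 - 1/N`), and `χ^∞_t` for the mean field limit
(`rN = rN' = 1`). -/
noncomputable def chiAux (a q ε c T σ ρ rN rN' t : ℝ) : ℝ :=
  1 / 2 * σ ^ 2 * (1 - ρ ^ 2) * rN' * ∫ s in t..T, etaAux a q ε c T rN s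

open Filter Set

set_option maxHeartbeats 400000

set_option maxHeartbeats 2000000

namespace St5

noncomputable def num (a q ε c T : ℝ) (p : ℝ × ℝ) : ℝ :=
  -(ε - q ^ 2) *
      (Real.exp (((-(a + q) + Real.sqrt ((a + q) ^ 2 + p.1 * (ε - q ^ 2))) -
          (-(a + q) - Real.sqrt ((a + q) ^ 2 + p.1 * (ε - q ^ 2)))) * (T - p.2)) - 1) -
    c * ((-(a + q) + Real.sqrt ((a + q) ^ 2 + p.1 * (ε - q ^ 2))) *
        Real.exp (((-(a + q) + Real.sqrt ((a + q) ^ 2 + p.1 * (ε - q ^ 2))) -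
          (-(a + q) - Real.sqrt ((a + q) ^ 2 + p.1 * (ε - q ^ 2)))) * (T - p.2)) -
      (-(a + q) - Real.sqrt ((a + q) ^ 2 + p.1 * (ε - q ^ 2))))

noncomputable def den (a q ε c T : ℝ) (p : ℝ × ℝ) : ℝ :=
  ((-(a + q) - Real.sqrt ((a + q) ^ 2 + p.1 * (ε - q ^ 2))) *
      Real.exp (((-(a + q) + Real.sqrt ((a + q) ^ 2 + p.1 * (ε - q ^ 2))) -
          (-(a + q) - Real.sqrt ((a + q) ^ 2 + p.1 * (ε - q ^ 2)))) * (T - p.2)) -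
    (-(a + q) + Real.sqrt ((a + q) ^ 2 + p.1 * (ε - q ^ 2)))) -
    c * p.1 *
      (Real.exp (((-(a + q) + Real.sqrt ((a + q) ^ 2 + p.1 * (ε - q ^ 2))) -
          (-(a + q) - Real.sqrt ((a + q) ^ 2 + p.1 * (ε - q ^ 2)))) * (T - p.2)) - 1)

lemma etaAux_eq (a q ε c T : ℝ) (p : ℝ × ℝ) :
    etaAux a q ε c T p.1 p.2 = num a q ε c T p / den a q ε c T p := rfl

lemma cont_num (a q ε c T : ℝ) : Continuous (num a q ε c T) := by
  unfold num; fun_prop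

lemma cont_den (a q ε c T : ℝ) : Continuous (den a q ε c T) := by
  unfold den; fun_prop

lemma den_neg {a q ε c T : ℝ} (ha : 0 ≤ a) (hq : 0 ≤ q) (hc : 0 ≤ c) (hε : q ^ 2 ≤ ε)
    (hR : 0 < (a + q) ^ 2 + (ε - q ^ 2)) {p : ℝ × ℝ}
    (hp : p ∈ Icc (1/2 : ℝ) 1 ×ˢ Iic T) : den a q ε c T p < 0 := by
  obtain ⟨⟨hr1, hr2⟩, hs⟩ := hp
  set r := p.1
  set s := p.2
  have hRpos : 0 < (a + q) ^ 2 + r * (ε - q ^ 2) := by nlinarith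
  have hsq : 0 < Real.sqrt ((a + q) ^ 2 + r * (ε - q ^ 2)) := Real.sqrt_pos.2 hRpos
  have hsqge : a + q ≤ Real.sqrt ((a + q) ^ 2 + r * (ε - q ^ 2)) := by
    have h1 : (a + q) = Real.sqrt ((a + q) ^ 2) := (Real.sqrt_sq (by positivity)).symm
    rw [h1]
    exact Real.sqrt_le_sqrt (by nlinarith)
  have he : 1 ≤ Real.exp (((-(a + q) + Real.sqrt ((a + q) ^ 2 + r * (ε - q ^ 2))) -
          (-(a + q) - Real.sqrt ((a + q) ^ 2 + r * (ε - q ^ 2)))) * (T - s)) := by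
    apply Real.one_le_exp
    have : (0:ℝ) ≤ T - s := by simp only [Set.mem_Iic] at hs; linarith
    nlinarith
  set E := Real.exp (((-(a + q) + Real.sqrt ((a + q) ^ 2 + r * (ε - q ^ 2))) -
          (-(a + q) - Real.sqrt ((a + q) ^ 2 + r * (ε - q ^ 2)))) * (T - s))
  unfold den
  have hdm : -(a + q) - Real.sqrt ((a + q) ^ 2 + r * (ε - q ^ 2)) < 0 := by nlinarith
  nlinarith [mul_nonneg (mul_nonneg hc (by linarith : (0:ℝ) ≤ r)) (by linarith : (0:ℝ) ≤ E - 1),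
    mul_le_mul_of_nonpos_left he (le_of_lt hdm)]

lemma cont_eta {a q ε c T : ℝ} (ha : 0 ≤ a) (hq : 0 ≤ q) (hc : 0 ≤ c) (hε : q ^ 2 ≤ ε)
    (hR : 0 < (a + q) ^ 2 + (ε - q ^ 2)) :
    ContinuousOn (fun p : ℝ × ℝ => etaAux a q ε c T p.1 p.2) (Icc (1/2 : ℝ) 1 ×ˢ Iic T) := by
  simp only [etaAux_eq]
  exact (cont_num a q ε c T).continuousOn.div (cont_den a q ε c T).continuousOn
    (fun p hp => (den_neg ha hq hc hε hR hp).ne)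

lemma rseq_tendsto : Tendsto (fun N : ℕ => 1 - 1 / (N:ℝ) ^ 2) atTop (nhds 1) := by
  have h : Tendsto (fun N : ℕ => 1 / (N:ℝ) ^ 2) atTop (nhds 0) := by
    simpa [div_mul_div_comm, ← pow_two] using
      ((tendsto_one_div_atTop_nhds_zero_nat (𝕜 := ℝ)).mul (tendsto_one_div_atTop_nhds_zero_nat (𝕜 := ℝ)))
  simpa using tendsto_const_nhds.sub h

lemma rseq_mem : ∀ᶠ N : ℕ in atTop, (1 - 1 / (N:ℝ) ^ 2) ∈ Icc (1/2 : ℝ) 1 := by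
  filter_upwards [eventually_ge_atTop 2] with N hN
  have hN' : (2:ℝ) ≤ (N:ℝ) := by exact_mod_cast hN
  constructor
  · have : 1 / (N:ℝ) ^ 2 ≤ 1/4 := by
      rw [div_le_div_iff₀ (by positivity) (by norm_num)]
      nlinarith
    linarith
  · have : 0 ≤ 1 / (N:ℝ) ^ 2 := by positivity
    linarith

lemma eta_tendsto {a q ε c T : ℝ} (ha : 0 ≤ a) (hq : 0 ≤ q) (hc : 0 ≤ c) (hε : q ^ 2 ≤ ε)
    (hR : 0 < (a + q) ^ 2 + (ε - q ^ 2)) {s : ℝ} (hs : s ≤ T) :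
    Tendsto (fun N : ℕ => etaAux a q ε c T (1 - 1 / (N:ℝ) ^ 2) s) atTop
      (nhds (etaAux a q ε c T 1 s)) := by
  have hmem : ((1:ℝ), s) ∈ Icc (1/2 : ℝ) 1 ×ˢ Iic T := ⟨⟨by norm_num, le_refl 1⟩, hs⟩
  have hcwa := (cont_eta (T := T) ha hq hc hε hR).continuousWithinAt hmem
  have hseq : Tendsto (fun N : ℕ => ((1 - 1 / (N:ℝ) ^ 2, s) : ℝ × ℝ)) atTop
      (nhdsWithin ((1:ℝ), s) (Icc (1/2 : ℝ) 1 ×ˢ Iic T)) := by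
    rw [tendsto_nhdsWithin_iff]
    refine ⟨rseq_tendsto.prodMk_nhds tendsto_const_nhds, ?_⟩
    filter_upwards [rseq_mem] with N hN
    exact ⟨hN, hs⟩
  have := hcwa.tendsto.comp hseq
  simpa [Function.comp_def] using this

end St5

/-- For each fixed `(t,x,m) ∈ [0,T] × ℝ × ℝ`, the value functions
`v^N(t,x,m) = (η^N_t/2)(x − m)² + χ^N_t` converge, as `N → ∞`, to
`v^∞(t,x,m) = (η^∞_t/2)(x − m)² + χ^∞_t`. -/
theorem statement_5 (T a q ε c σ ρ t x m : ℝ) (hT : 0 < T)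
    (ha : 0 ≤ a) (hq : 0 ≤ q) (hc : 0 ≤ c) (hε : q ^ 2 ≤ ε)
    (hR : 0 < (a + q) ^ 2 + (ε - q ^ 2)) (hσ : 0 < σ) (hρ₁ : -1 ≤ ρ) (hρ₂ : ρ ≤ 1)
    (ht₀ : 0 ≤ t) (ht : t ≤ T) :
    Filter.Tendsto
      (fun N : ℕ => etaAux a q ε c T (1 - 1 / (N : ℝ) ^ 2) t / 2 * (x - m) ^ 2 +
        chiAux a q ε c T σ ρ (1 - 1 / (N : ℝ) ^ 2) (1 - 1 / (N : ℝ)) t)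
      Filter.atTop
      (nhds (etaAux a q ε c T 1 t / 2 * (x - m) ^ 2 + chiAux a q ε c T σ ρ 1 1 t)) := by
  have heta : Tendsto (fun N : ℕ => etaAux a q ε c T (1 - 1 / (N:ℝ) ^ 2) t / 2 * (x - m) ^ 2)
      atTop (nhds (etaAux a q ε c T 1 t / 2 * (x - m) ^ 2)) :=
    ((St5.eta_tendsto ha hq hc hε hR ht).div_const 2).mul_const _
  have hK : IsCompact (Icc (1/2 : ℝ) 1 ×ˢ Icc t T) := isCompact_Icc.prod isCompact_Icc
  have hKS : Icc (1/2 : ℝ) 1 ×ˢ Icc t T ⊆ Icc (1/2 : ℝ) 1 ×ˢ Iic T :=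
    Set.prod_mono_right (fun s hs => hs.2)
  obtain ⟨C, hC⟩ := hK.exists_bound_of_continuousOn
    ((St5.cont_eta (T := T) ha hq hc hε hR).mono hKS)
  have hIsub : Set.uIoc t T ⊆ Icc t T := by
    rw [Set.uIoc_of_le ht]
    exact Set.Ioc_subset_Icc_self
  have hint : Tendsto (fun N : ℕ => ∫ s in t..T, etaAux a q ε c T (1 - 1 / (N:ℝ) ^ 2) s)
      atTop (nhds (∫ s in t..T, etaAux a q ε c T 1 s)) := by
    apply intervalIntegral.tendsto_integral_filter_of_dominated_convergence (fun _ => C)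
    · filter_upwards [St5.rseq_mem] with N hN
      have hcont' : ContinuousOn (fun s : ℝ => ((1 - 1 / (N:ℝ) ^ 2, s) : ℝ × ℝ))
          (Set.uIoc t T) := (continuous_const.prodMk continuous_id).continuousOn
      have hcont : ContinuousOn (fun s : ℝ => etaAux a q ε c T (1 - 1 / (N:ℝ) ^ 2) s)
          (Set.uIoc t T) := by
        have := (St5.cont_eta (T := T) ha hq hc hε hR).comp hcont'
          (fun s hs => ⟨hN, (hIsub hs).2⟩)
        simpa [Function.comp_def] using this
      exact hcont.aestronglyMeasurable measurableSet_uIoc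
    · filter_upwards [St5.rseq_mem] with N hN
      refine MeasureTheory.ae_of_all _ (fun s hs => ?_)
      simpa using hC ((1 - 1 / (N:ℝ) ^ 2, s)) ⟨hN, hIsub hs⟩
    · exact intervalIntegrable_const
    · refine MeasureTheory.ae_of_all _ (fun s hs => ?_)
      exact St5.eta_tendsto ha hq hc hε hR (hIsub hs).2
  have hr' : Tendsto (fun N : ℕ => 1 - 1 / (N:ℝ)) atTop (nhds 1) := by
    simpa using tendsto_const_nhds.sub (tendsto_one_div_atTop_nhds_zero_nat (𝕜 := ℝ))
  have hchi : Tendsto (fun N : ℕ =>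
      chiAux a q ε c T σ ρ (1 - 1 / (N:ℝ) ^ 2) (1 - 1 / (N:ℝ)) t) atTop
      (nhds (chiAux a q ε c T σ ρ 1 1 t)) := by
    unfold chiAux
    exact (tendsto_const_nhds.mul hr').mul hint
  exact heta.add hchi
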